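/- If there exists a complete set of d+1 pairwise mutually unbiased orthonormal bases of ℂ^d, then there exists a complete-pseudo-MUB-system in dimension d, i.e. a finitely supported function f : T^{d−1} → ℝ such that: f(y) ≥ 0 for all y; the support of f is contained in ORT_d ∪ UB_d ∪ {0}; f(0) = d²; ∑_y f(y) = d⁴; and for every γ ∈ ℤ^{d−1} the finite exponential sum ∑_y f(y) e^{2πi⟨γ,y⟩} is a nonnegative real number. -/

import Mathlib

open scoped ComplexInnerProductSpace

/-- Two orthonormal bases of `ℂ^d` are *unbiased* if all scalar products between
their members have modulus `1/√d`. -/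
def Unbiased {d : ℕ} (A B : OrthonormalBasis (Fin d) ℂ (EuclideanSpace ℂ (Fin d))) : Prop :=
  ∀ j k, ‖⟪A j, B k⟫‖ = 1 / Real.sqrt d

/-- `e^{2πi y}` for a point `y` of the torus `ℝ/ℤ`. -/
noncomputable def torusExp (y : AddCircle (1 : ℝ)) : ℂ := (AddCircle.toCircle y : ℂ)

/-- The set `ORT_d ⊆ T^{d-1}` of points `α` with `1 + ∑_j e^{2πi α_j} = 0`. -/
noncomputable def ORT (d : ℕ) : Set (Fin (d - 1) → AddCircle (1 : ℝ)) :=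
  {α | 1 + ∑ j, torusExp (α j) = 0}

/-- The set `UB_d ⊆ T^{d-1}` of points `α` with `|1 + ∑_j e^{2πi α_j}| = √d`. -/
noncomputable def UB (d : ℕ) : Set (Fin (d - 1) → AddCircle (1 : ℝ)) :=
  {α | ‖1 + ∑ j, torusExp (α j)‖ = Real.sqrt d}

namespace PseudoMUBAux

open Complex ComplexConjugate

lemma torusExp_add (a b : AddCircle (1 : ℝ)) :
    torusExp (a + b) = torusExp a * torusExp b := by
  simp [torusExp, AddCircle.toCircle_add]

lemma torusExp_zero : torusExp (0 : AddCircle (1 : ℝ)) = 1 := by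
  simp [torusExp]

lemma torusExp_neg (a : AddCircle (1 : ℝ)) : torusExp (-a) = conj (torusExp a) := by
  have h : AddCircle.toCircle (-a) = (AddCircle.toCircle a)⁻¹ := by
    apply eq_inv_of_mul_eq_one_left
    rw [← AddCircle.toCircle_add, neg_add_cancel, AddCircle.toCircle_zero]
  rw [torusExp, h, Circle.coe_inv_eq_conj]; rfl

lemma torusExp_sub (a b : AddCircle (1 : ℝ)) :
    torusExp (a - b) = torusExp a * conj (torusExp b) := by
  rw [sub_eq_add_neg, torusExp_add, torusExp_neg]

lemma abs_torusExp (a : AddCircle (1 : ℝ)) : ‖torusExp a‖ = 1 :=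
  Circle.norm_coe _

/-- Turn a unit-modulus complex number into a `Circle` element. -/
noncomputable def toC (w : ℂ) : Circle :=
  if h : ‖w‖ = 1 then
    ⟨w, show w ∈ Submonoid.unitSphere ℂ from
      mem_sphere_zero_iff_norm.mpr (by rw [h])⟩
  else 1

lemma coe_toC {w : ℂ} (h : ‖w‖ = 1) : ((toC w : Circle) : ℂ) = w := by
  unfold toC
  erw [dif_pos h]

/-- An inverse of `torusExp`. -/
noncomputable def phase (u : Circle) : AddCircle (1 : ℝ) :=
  (AddCircle.homeomorphCircle (one_ne_zero)).symm u

lemma torusExp_phase (u : Circle) : torusExp (phase u) = (u : ℂ) := by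
  rw [torusExp, ← AddCircle.homeomorphCircle_apply one_ne_zero, phase,
    Homeomorph.apply_symm_apply]

section Main

variable (m : ℕ)
  (B : Fin (m + 2 + 1) → OrthonormalBasis (Fin (m + 2)) ℂ (EuclideanSpace ℂ (Fin (m + 2))))

/-- The coordinate of the `p.2`-th vector of basis `p.1 + 1` w.r.t. the `0`-th basis. -/
noncomputable def cc (p : Fin (m + 2) × Fin (m + 2)) (i : Fin (m + 2)) : ℂ :=
  ⟪(B 0) i, (B p.1.succ) p.2⟫

/-- The renormalized (unit-modulus) coordinate. -/
noncomputable def zz (p : Fin (m + 2) × Fin (m + 2)) (i : Fin (m + 2)) : ℂ :=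
  (Real.sqrt ((m : ℝ) + 2) : ℂ) * cc m B p i

/-- The phase point on the torus associated to a vector. -/
noncomputable def al (p : Fin (m + 2) × Fin (m + 2)) (j : Fin (m + 1)) :
    AddCircle (1 : ℝ) :=
  phase (toC (zz m B p j.succ * conj (zz m B p 0)))

end Main

end PseudoMUBAux

open PseudoMUBAux Complex ComplexConjugate

/-- A complete set of `d+1` mutually unbiased bases of `ℂ^d` gives rise to a
complete-pseudo-MUB-system in dimension `d`. -/
theorem pseudo_mub_of_complete_mub (d : ℕ) (hd : 2 ≤ d)
    (B : Fin (d + 1) → OrthonormalBasis (Fin d) ℂ (EuclideanSpace ℂ (Fin d)))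
    (hB : ∀ j k, j ≠ k → Unbiased (B j) (B k)) :
    ∃ f : (Fin (d - 1) → AddCircle (1 : ℝ)) →₀ ℝ,
      (∀ y, 0 ≤ f y) ∧
      (∀ y ∈ f.support, y ∈ ORT d ∪ UB d ∪ {0}) ∧
      f 0 = (d : ℝ) ^ 2 ∧
      (∑ y ∈ f.support, f y) = (d : ℝ) ^ 4 ∧
      (∀ γ : Fin (d - 1) → ℤ,
        ((∑ y ∈ f.support, (f y : ℂ) * ∏ j, torusExp (γ j • y j)).im = 0 ∧
          0 ≤ (∑ y ∈ f.support, (f y : ℂ) * ∏ j, torusExp (γ j • y j)).re)) := by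
  obtain ⟨m, rfl⟩ : ∃ m, d = m + 2 := ⟨d - 2, by omega⟩
  show ∃ f : (Fin (m + 1) → AddCircle (1 : ℝ)) →₀ ℝ,
      (∀ y, 0 ≤ f y) ∧
      (∀ y ∈ f.support, y ∈ ORT (m + 2) ∪ UB (m + 2) ∪ {0}) ∧
      f 0 = ((m + 2 : ℕ) : ℝ) ^ 2 ∧
      (∑ y ∈ f.support, f y) = ((m + 2 : ℕ) : ℝ) ^ 4 ∧
      (∀ γ : Fin (m + 1) → ℤ,
        ((∑ y ∈ f.support, (f y : ℂ) * ∏ j, torusExp (γ j • y j)).im = 0 ∧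
          0 ≤ (∑ y ∈ f.support, (f y : ℂ) * ∏ j, torusExp (γ j • y j)).re))
  have hcast : ((m + 2 : ℕ) : ℝ) = (m : ℝ) + 2 := by push_cast; ring
  have hnpos : (0 : ℝ) < (m : ℝ) + 2 := by positivity
  have hsqpos : (0 : ℝ) < Real.sqrt ((m : ℝ) + 2) := Real.sqrt_pos.mpr hnpos
  -- modulus of the coordinates
  have habs : ∀ (p : Fin (m + 2) × Fin (m + 2)) (i : Fin (m + 2)),
      ‖cc m B p i‖ = 1 / Real.sqrt ((m : ℝ) + 2) := by
    intro p i
    have h := hB 0 p.1.succ (Fin.succ_ne_zero _).symm i p.2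
    simpa [cc, hcast] using h
  have habsz : ∀ (p : Fin (m + 2) × Fin (m + 2)) (i : Fin (m + 2)),
      ‖zz m B p i‖ = 1 := by
    intro p i
    rw [zz, norm_mul, habs, Complex.norm_real, Real.norm_eq_abs,
      _root_.abs_of_nonneg (Real.sqrt_nonneg _)]
    field_simp
  have hz1 : ∀ (p : Fin (m + 2) × Fin (m + 2)) (i : Fin (m + 2)),
      zz m B p i * conj (zz m B p i) = 1 := by
    intro p i
    rw [Complex.mul_conj, Complex.normSq_eq_norm_sq, habsz]
    norm_num
  -- torusExp of the phase points
  have hTe : ∀ (p : Fin (m + 2) × Fin (m + 2)) (j : Fin (m + 1)),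
      torusExp (al m B p j) = zz m B p j.succ * conj (zz m B p 0) := by
    intro p j
    rw [al, torusExp_phase, coe_toC]
    rw [norm_mul, Complex.norm_conj, habsz, habsz, mul_one]
  -- the inner product in terms of coordinates
  have hip : ∀ p q : Fin (m + 2) × Fin (m + 2),
      ⟪(B p.1.succ) p.2, (B q.1.succ) q.2⟫ = ∑ i, conj (cc m B p i) * cc m B q i := by
    intro p q
    rw [← OrthonormalBasis.sum_inner_mul_inner (B 0)]
    refine Finset.sum_congr rfl fun i _ => ?_
    rw [cc, cc, ← inner_conj_symm]
  -- the key identity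
  have hkey : ∀ p q : Fin (m + 2) × Fin (m + 2),
      1 + ∑ j : Fin (m + 1), torusExp (al m B p j - al m B q j)
        = (conj (zz m B p 0) * zz m B q 0) *
          (((m : ℝ) + 2) * conj ⟪(B p.1.succ) p.2, (B q.1.succ) q.2⟫) := by
    intro p q
    have step1 : 1 + ∑ j : Fin (m + 1), torusExp (al m B p j - al m B q j)
        = (conj (zz m B p 0) * zz m B q 0) *
          ∑ i : Fin (m + 2), zz m B p i * conj (zz m B q i) := by
      rw [Fin.sum_univ_succ (f := fun i => zz m B p i * conj (zz m B q i))]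
      rw [mul_add]
      congr 1
      · have h1 := hz1 p 0
        have h2 := hz1 q 0
        have : (conj (zz m B p 0) * zz m B q 0) * (zz m B p 0 * conj (zz m B q 0)) = 1 := by
          calc (conj (zz m B p 0) * zz m B q 0) * (zz m B p 0 * conj (zz m B q 0))
              = (zz m B p 0 * conj (zz m B p 0)) * (zz m B q 0 * conj (zz m B q 0)) := by ring
            _ = 1 := by rw [h1, h2]; norm_num
        exact this.symm
      · rw [Finset.mul_sum]
        refine Finset.sum_congr rfl fun j _ => ?_
        rw [torusExp_sub, hTe, hTe]
        simp only [map_mul, Complex.conj_conj]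
        ring
    rw [step1, hip p q]
    congr 1
    rw [map_sum, Finset.mul_sum]
    refine Finset.sum_congr rfl fun i _ => ?_
    rw [zz, zz]
    simp only [map_mul, Complex.conj_conj, Complex.conj_ofReal]
    have hss : ((Real.sqrt ((m : ℝ) + 2) : ℝ) : ℂ) * ((Real.sqrt ((m : ℝ) + 2) : ℝ) : ℂ)
        = ((m : ℝ) : ℂ) + 2 := by
      rw [← Complex.ofReal_mul, Real.mul_self_sqrt (by positivity)]
      push_cast; ring
    linear_combination (cc m B p i * conj (cc m B q i)) * hss
  -- modulus of the key expression
  have hkeyabs : ∀ p q : Fin (m + 2) × Fin (m + 2),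
      ‖1 + ∑ j : Fin (m + 1), torusExp (al m B p j - al m B q j)‖
        = ((m : ℝ) + 2) * ‖⟪(B p.1.succ) p.2, (B q.1.succ) q.2⟫‖ := by
    intro p q
    rw [hkey]
    simp only [norm_mul, Complex.norm_conj, habsz, one_mul]
    congr 1
    rw [show ((m : ℝ) : ℂ) + 2 = (((m : ℝ) + 2 : ℝ) : ℂ) by push_cast; ring,
      Complex.norm_real, Real.norm_eq_abs, _root_.abs_of_nonneg hnpos.le]
  -- the modulus for distinct pairs lies in {0, √(m+2)}
  have hdistinct : ∀ p q : Fin (m + 2) × Fin (m + 2), p ≠ q →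
      ‖1 + ∑ j : Fin (m + 1), torusExp (al m B p j - al m B q j)‖ = 0 ∨
      ‖1 + ∑ j : Fin (m + 1), torusExp (al m B p j - al m B q j)‖
        = Real.sqrt ((m : ℝ) + 2) := by
    intro p q hpq
    rw [hkeyabs]
    by_cases h1 : p.1 = q.1
    · left
      have h2 : p.2 ≠ q.2 := by
        intro h2; exact hpq (Prod.ext h1 h2)
      have : ⟪(B p.1.succ) p.2, (B q.1.succ) q.2⟫ = 0 := by
        rw [h1]
        exact (B q.1.succ).orthonormal.2 (by simpa [h1] using h2)
      rw [this]; simp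
    · right
      have hne : p.1.succ ≠ q.1.succ := fun h => h1 (Fin.succ_injective _ h)
      have := hB p.1.succ q.1.succ hne p.2 q.2
      rw [this, hcast, mul_one_div]
      exact Real.div_sqrt
  -- zero pair iff equal
  have hzero_iff : ∀ p q : Fin (m + 2) × Fin (m + 2),
      al m B p - al m B q = 0 ↔ p = q := by
    intro p q
    constructor
    · intro h
      by_contra hpq
      have hval : 1 + ∑ j : Fin (m + 1), torusExp (al m B p j - al m B q j)
          = ((m : ℝ) + 2 : ℝ) := by
        have hj : ∀ j : Fin (m + 1), al m B p j - al m B q j = 0 := by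
          intro j
          have := congrFun h j
          simpa [Pi.sub_apply, Pi.zero_apply] using this
        rw [Finset.sum_congr rfl fun j _ => by rw [hj j, torusExp_zero]]
        simp [Finset.card_univ]
        push_cast; ring
      have h1 := hdistinct p q hpq
      rw [hval] at h1
      simp only [Complex.norm_real, Real.norm_eq_abs, _root_.abs_of_nonneg hnpos.le] at h1
      rcases h1 with h1 | h1
      · linarith
      · have : Real.sqrt ((m : ℝ) + 2) < (m : ℝ) + 2 :=
          (Real.sqrt_lt' hnpos).mpr (by nlinarith)
        linarith
    · intro h; rw [h, sub_self]
  -- definition of f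
  set g : (Fin (m + 2) × Fin (m + 2)) × (Fin (m + 2) × Fin (m + 2)) →
      (Fin (m + 1) → AddCircle (1 : ℝ)) := fun pq => al m B pq.1 - al m B pq.2 with hg
  set f : (Fin (m + 1) → AddCircle (1 : ℝ)) →₀ ℝ :=
    ∑ pq : (Fin (m + 2) × Fin (m + 2)) × (Fin (m + 2) × Fin (m + 2)),
      Finsupp.single (g pq) 1 with hf
  have fapply : ∀ y, f y = ∑ pq : (Fin (m + 2) × Fin (m + 2)) × (Fin (m + 2) × Fin (m + 2)),
      (Finsupp.single (g pq) (1:ℝ)) y := by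
    intro y
    rw [hf, Finsupp.finset_sum_apply]
  refine ⟨f, ?_, ?_, ?_, ?_, ?_⟩
  · -- nonnegativity
    intro y
    rw [fapply]
    refine Finset.sum_nonneg fun pq _ => ?_
    rw [Finsupp.single_apply]
    split_ifs <;> norm_num
  · -- support
    intro y hy
    obtain ⟨pq, _, hpq⟩ := Finsupp.mem_support_finset_sum y (by rw [← hf] at *; exact hy)
    have hyg : y = g pq := by
      rcases Finsupp.mem_support_iff.mp hpq with h
      rw [Finsupp.single_apply] at h
      by_contra hne
      exact h (if_neg fun hc => hne hc.symm)
    by_cases heq : pq.1 = pq.2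
    · right
      have : g pq = 0 := by rw [hg]; simp [heq]
      rw [hyg, this]; rfl
    · left
      have hd := hdistinct pq.1 pq.2 heq
      have hyj : ∀ j : Fin (m + 1), torusExp (y j) = torusExp (al m B pq.1 j - al m B pq.2 j) := by
        intro j; rw [hyg, hg]; rfl
      rcases hd with h0 | hsq
      · left
        show 1 + ∑ j : Fin (m + 1), torusExp (y j) = 0
        rw [Finset.sum_congr rfl fun j _ => hyj j]
        exact norm_eq_zero.mp h0
      · right
        show ‖1 + ∑ j : Fin (m + 1), torusExp (y j)‖ = Real.sqrt ((m + 2 : ℕ) : ℝ)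
        rw [Finset.sum_congr rfl fun j _ => hyj j, hsq, hcast]
  · -- f 0 = d^2
    rw [fapply]
    have : ∀ pq : (Fin (m + 2) × Fin (m + 2)) × (Fin (m + 2) × Fin (m + 2)),
        (Finsupp.single (g pq) (1:ℝ)) 0 = if pq.1 = pq.2 then 1 else 0 := by
      intro pq
      rw [Finsupp.single_apply]
      congr 1
      simp only [eq_iff_iff]
      rw [← hzero_iff pq.1 pq.2]
    rw [Finset.sum_congr rfl fun pq _ => this pq]
    rw [Fintype.sum_prod_type]
    have : ∀ p : Fin (m + 2) × Fin (m + 2),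
        (∑ q : Fin (m + 2) × Fin (m + 2), if p = q then (1:ℝ) else 0) = 1 := by
      intro p
      rw [Finset.sum_ite_eq]
      simp
    rw [Finset.sum_congr rfl fun p _ => this p]
    simp [Finset.card_univ]
    push_cast; ring
  · -- total mass
    have : (∑ y ∈ f.support, f y) = f.sum fun _ r => r := rfl
    rw [this, hf, ← Finsupp.sum_finset_sum_index (by intro a; rfl) (by intro a b₁ b₂; rfl)]
    rw [Finset.sum_congr rfl fun pq _ => Finsupp.sum_single_index rfl]
    simp [Finset.card_univ]
    push_cast; ring
  · -- Fourier positivity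
    intro γ
    set c : (Fin (m + 1) → AddCircle (1 : ℝ)) → ℂ :=
      fun y => ∏ j, torusExp (γ j • y j) with hc
    have hsum : (∑ y ∈ f.support, (f y : ℂ) * c y) = f.sum fun y r => (r : ℂ) * c y := rfl
    have h0 : ∀ y, ((0 : ℝ) : ℂ) * c y = 0 := by intro y; simp
    have hadd : ∀ y (b₁ b₂ : ℝ), ((b₁ + b₂ : ℝ) : ℂ) * c y = (b₁ : ℂ) * c y + (b₂ : ℂ) * c y := by
      intro y b₁ b₂; push_cast; ring
    have hexp : f.sum (fun y r => (r : ℂ) * c y)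
        = ∑ pq : (Fin (m + 2) × Fin (m + 2)) × (Fin (m + 2) × Fin (m + 2)),
            ((1 : ℝ) : ℂ) * c (g pq) := by
      rw [hf, ← Finsupp.sum_finset_sum_index h0 hadd]
      exact Finset.sum_congr rfl fun pq _ => Finsupp.sum_single_index (h0 _)
    set χ : Fin (m + 2) × Fin (m + 2) → ℂ :=
      fun p => ∏ j, torusExp (γ j • al m B p j) with hχ
    have hcg : ∀ pq : (Fin (m + 2) × Fin (m + 2)) × (Fin (m + 2) × Fin (m + 2)),
        c (g pq) = χ pq.1 * conj (χ pq.2) := by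
      intro pq
      rw [hc, hχ]
      simp only
      rw [map_prod, ← Finset.prod_mul_distrib]
      refine Finset.prod_congr rfl fun j _ => ?_
      have : γ j • g pq j = γ j • al m B pq.1 j - γ j • al m B pq.2 j := by
        rw [hg]; simp only [Pi.sub_apply, smul_sub]
      rw [this, torusExp_sub]
    have hfinal : (∑ y ∈ f.support, (f y : ℂ) * c y)
        = (∑ p : Fin (m + 2) × Fin (m + 2), χ p) *
          conj (∑ p : Fin (m + 2) × Fin (m + 2), χ p) := by
      have h1 : ∀ pq : (Fin (m + 2) × Fin (m + 2)) × (Fin (m + 2) × Fin (m + 2)),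
          ((1 : ℝ) : ℂ) * c (g pq) = χ pq.1 * conj (χ pq.2) := fun pq => by
        rw [hcg pq]; simp
      rw [hsum, hexp]
      rw [Finset.sum_congr rfl fun pq _ => h1 pq]
      rw [Fintype.sum_prod_type, map_sum, Finset.sum_mul_sum]
    rw [show (∑ y ∈ f.support, (f y : ℂ) * ∏ j, torusExp (γ j • y j))
        = ∑ y ∈ f.support, (f y : ℂ) * c y from rfl, hfinal, Complex.mul_conj]
    constructor
    · simp
    · simp [Complex.normSq_nonneg]
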